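/- For every integer N ≥ 1 there exists a stochastic language p over the one-letter alphabet Σ = {a} such that p is computed by a multiplicity automaton with 3 states, and every probabilistic automaton computing p has at least N states. -/

import Mathlib

open scoped BigOperators Matrix

/-- A stochastic language over the alphabet `A`: a nonnegative real-valued function on
words whose values are summable with sum `1`. -/
def IsStochastic {A : Type*} (p : List A → ℝ) : Prop :=
  (∀ w, 0 ≤ p w) ∧ HasSum p 1

/-- The matrix associated to a word: the product of the letter matrices. -/
def wordMat {A Q : Type*} [Fintype Q] [DecidableEq Q] (T : A → Matrix Q Q ℝ)
    (w : List A) : Matrix Q Q ℝ :=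
  (w.map T).prod

/-- The series computed by the multiplicity automaton `(ι, T, τ)`. -/
def maSeries {A Q : Type*} [Fintype Q] [DecidableEq Q] (ι τ : Q → ℝ)
    (T : A → Matrix Q Q ℝ) (w : List A) : ℝ :=
  ι ⬝ᵥ (wordMat T w).mulVec τ

/-- The series of state `q` of the multiplicity automaton. -/
def stateSeries {A Q : Type*} [Fintype Q] [DecidableEq Q] (τ : Q → ℝ)
    (T : A → Matrix Q Q ℝ) (q : Q) (w : List A) : ℝ :=
  (wordMat T w).mulVec τ q

/-- `(ι, T, τ)` is a reduced representation of the stochastic language `P`. -/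
def IsReducedRep {A Q : Type*} [Fintype Q] [DecidableEq Q] (ι τ : Q → ℝ)
    (T : A → Matrix Q Q ℝ) (P : List A → ℝ) : Prop :=
  maSeries ι τ T = P ∧ (∀ q, IsStochastic (stateSeries τ T q)) ∧
    LinearIndependent ℝ (stateSeries τ T)

/-- `(ι, T, τ)` is a probabilistic automaton: all weights are nonnegative, the initial
weights sum to `1`, and at every state the terminal weight plus all outgoing transition
weights sum to `1`. -/
def IsPA {A Q : Type*} [Fintype A] [Fintype Q] [DecidableEq Q] (ι τ : Q → ℝ)
    (T : A → Matrix Q Q ℝ) : Prop :=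
  (∀ q, 0 ≤ ι q) ∧ (∀ q, 0 ≤ τ q) ∧ (∀ x q q', 0 ≤ T x q q') ∧
    (∑ q : Q, ι q = 1) ∧ ∀ q, τ q + ∑ x : A, ∑ q' : Q, T x q q' = 1


set_option linter.unusedSectionVars false
set_option linter.unusedVariables false

open Real

namespace Stmt12Aux

variable {Q : Type*} [Fintype Q] [DecidableEq Q]

/-- a positive path of length `k` from `q` through `M` ending in the support of `τ` -/
def PosPath (M : Matrix Q Q ℝ) (τ : Q → ℝ) (q : Q) (k : ℕ) : Prop :=
  ∃ f : ℕ → Q, f 0 = q ∧ (∀ i < k, 0 < M (f i) (f (i + 1))) ∧ 0 < τ (f k)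

variable {M : Matrix Q Q ℝ} {τ : Q → ℝ}

lemma g_nonneg (hM : ∀ q q', 0 ≤ M q q') (hτ : ∀ q, 0 ≤ τ q) (k : ℕ) (q : Q) :
    0 ≤ (M ^ k).mulVec τ q := by
  induction k generalizing q with
  | zero => rw [pow_zero, Matrix.one_mulVec]; exact hτ q
  | succ k ih =>
      rw [pow_succ', ← Matrix.mulVec_mulVec]
      exact Finset.sum_nonneg fun q' _ => mul_nonneg (hM q q') (ih q')

lemma pos_path_of_pos (hM : ∀ q q', 0 ≤ M q q') (hτ : ∀ q, 0 ≤ τ q) {k : ℕ} {q : Q}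
    (h : 0 < (M ^ k).mulVec τ q) : PosPath M τ q k := by
  induction k generalizing q with
  | zero =>
      refine ⟨fun _ => q, rfl, fun i hi => absurd hi (by omega), ?_⟩
      rw [pow_zero, Matrix.one_mulVec] at h; exact h
  | succ k ih =>
      rw [pow_succ', ← Matrix.mulVec_mulVec] at h
      have : ∃ q', 0 < M q q' * (M ^ k).mulVec τ q' := by
        by_contra hc
        push_neg at hc
        have : (M.mulVec ((M ^ k).mulVec τ)) q ≤ 0 :=
          Finset.sum_nonpos fun q' _ => hc q'
        exact absurd h (not_lt.mpr this)
      obtain ⟨q', hq'⟩ := this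
      have h1 : 0 < M q q' := by
        rcases mul_pos_iff.mp hq' with ⟨h1, _⟩ | ⟨h1, h2⟩
        · exact h1
        · exact absurd (g_nonneg hM hτ k q') (not_le.mpr h2)
      have h2 : 0 < (M ^ k).mulVec τ q' := by
        rcases mul_pos_iff.mp hq' with ⟨_, h2⟩ | ⟨h1, _⟩
        · exact h2
        · exact absurd (hM q q') (not_le.mpr h1)
      obtain ⟨f, hf0, hfe, hfτ⟩ := ih h2
      refine ⟨fun m => Nat.rec q (fun i _ => f i) m, rfl, ?_, ?_⟩
      · intro i hi
        cases i with
        | zero => simpa [hf0] using h1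
        | succ j => exact hfe j (by omega)
      · exact hfτ

lemma pos_of_pos_path (hM : ∀ q q', 0 ≤ M q q') (hτ : ∀ q, 0 ≤ τ q) {k : ℕ} {q : Q}
    (h : PosPath M τ q k) : 0 < (M ^ k).mulVec τ q := by
  induction k generalizing q with
  | zero =>
      obtain ⟨f, hf0, _, hfτ⟩ := h
      rw [pow_zero, Matrix.one_mulVec, ← hf0]; exact hfτ
  | succ k ih =>
      obtain ⟨f, hf0, hfe, hfτ⟩ := h
      rw [pow_succ', ← Matrix.mulVec_mulVec]
      have hterm : 0 < M q (f 1) * (M ^ k).mulVec τ (f 1) := by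
        have h1 : 0 < M q (f 1) := hf0 ▸ hfe 0 (by omega)
        have h2 : 0 < (M ^ k).mulVec τ (f 1) :=
          ih ⟨fun m => f (m + 1), rfl, fun i hi => hfe (i + 1) (by omega), hfτ⟩
        exact mul_pos h1 h2
      calc (0:ℝ) < M q (f 1) * (M ^ k).mulVec τ (f 1) := hterm
        _ ≤ ∑ q', M q q' * (M ^ k).mulVec τ q' := by
            refine Finset.single_le_sum (fun q' _ => mul_nonneg (hM q q') (g_nonneg hM hτ k q')) (Finset.mem_univ _)

/-- insert one copy of a cycle -/
lemma pump_once {q : Q} {k i c : ℕ} (hc : 0 < c) (hik : i + c ≤ k)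
    (f : ℕ → Q) (hf0 : f 0 = q) (hfe : ∀ m < k, 0 < M (f m) (f (m + 1)))
    (hfτ : 0 < τ (f k)) (hcyc : f i = f (i + c)) :
    ∃ f' : ℕ → Q, f' 0 = q ∧ (∀ m < k + c, 0 < M (f' m) (f' (m + 1))) ∧
      0 < τ (f' (k + c)) ∧ f' i = f' (i + c) := by
  refine ⟨fun m => if m ≤ i + c then f m else f (m - c), ?_, ?_, ?_, ?_⟩
  · simp [hf0]
  · intro m hm
    by_cases h1 : m + 1 ≤ i + c
    · simp only [if_pos (by omega : m ≤ i + c), if_pos h1]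
      exact hfe m (by omega)
    · by_cases h2 : m ≤ i + c
      · have hm' : m = i + c := by omega
        simp only [if_pos h2, if_neg h1]
        have : m + 1 - c = i + 1 := by omega
        rw [this, hm', ← hcyc]
        exact hfe i (by omega)
      · simp only [if_neg h2, if_neg h1]
        have h3 : m + 1 - c = (m - c) + 1 := by omega
        rw [h3]
        exact hfe (m - c) (by omega)
  · have : ¬ (k + c ≤ i + c) := by omega
    simp only [if_neg this]
    have : k + c - c = k := by omega
    rw [this]; exact hfτ
  · simp only [if_pos (by omega : i ≤ i + c), if_pos (le_refl (i + c))]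
    exact hcyc

lemma pump_many {q : Q} {k i c : ℕ} (hc : 0 < c) (hik : i + c ≤ k)
    (f : ℕ → Q) (hf0 : f 0 = q) (hfe : ∀ m < k, 0 < M (f m) (f (m + 1)))
    (hfτ : 0 < τ (f k)) (hcyc : f i = f (i + c)) :
    ∀ j : ℕ, PosPath M τ q (k + j * c) := by
  have H : ∀ j : ℕ, ∃ f' : ℕ → Q, f' 0 = q ∧
      (∀ m < k + j * c, 0 < M (f' m) (f' (m + 1))) ∧
      0 < τ (f' (k + j * c)) ∧ f' i = f' (i + c) := by
    intro j
    induction j with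
    | zero => exact ⟨f, hf0, by simpa using hfe, by simpa using hfτ, hcyc⟩
    | succ j ih =>
        obtain ⟨f', h0, he, hτ', hcy⟩ := ih
        obtain ⟨f'', h0', he', hτ'', hcy'⟩ :=
          pump_once hc (by omega : i + c ≤ k + j * c) f' h0 he hτ' hcy
        have hkey : k + (j + 1) * c = k + j * c + c := by ring
        rw [hkey]
        exact ⟨f'', h0', he', hτ'', hcy'⟩
  intro j
  obtain ⟨f', h0, he, hτ', _⟩ := H j
  exact ⟨f', h0, he, hτ'⟩

/-- main pumping lemma -/
lemma pa_pump (hM : ∀ q q', 0 ≤ M q q') (hτ : ∀ q, 0 ≤ τ q) {q : Q} {k : ℕ}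
    (hk : Fintype.card Q ≤ k) (h : 0 < (M ^ k).mulVec τ q) :
    ∃ c, 0 < c ∧ c ≤ Fintype.card Q ∧ ∀ j : ℕ, 0 < (M ^ (k + j * c)).mulVec τ q := by
  obtain ⟨f, hf0, hfe, hfτ⟩ := pos_path_of_pos hM hτ h
  obtain ⟨a, b, hab, hfab⟩ :=
    Fintype.exists_ne_map_eq_of_card_lt (fun m : Fin (Fintype.card Q + 1) => f m)
      (by simp)
  rcases lt_or_gt_of_ne hab with hlt | hlt
  · refine ⟨(b : ℕ) - (a : ℕ), by omega, by omega, fun j => ?_⟩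
    have hcyc : f a = f ((a : ℕ) + ((b : ℕ) - (a : ℕ))) := by
      have : (a : ℕ) + ((b : ℕ) - (a : ℕ)) = b := by omega
      rw [this]; exact hfab
    exact pos_of_pos_path hM hτ
      (pump_many (by omega) (by omega) f hf0 hfe hfτ hcyc j)
  · refine ⟨(a : ℕ) - (b : ℕ), by omega, by omega, fun j => ?_⟩
    have hcyc : f b = f ((b : ℕ) + ((a : ℕ) - (b : ℕ))) := by
      have : (b : ℕ) + ((a : ℕ) - (b : ℕ)) = a := by omega
      rw [this]; exact hfab.symm
    exact pos_of_pos_path hM hτ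
      (pump_many (by omega) (by omega) f hf0 hfe hfτ hcyc j)

end Stmt12Aux

namespace Stmt12Aux

noncomputable def fseq (L : ℕ) (k : ℕ) : ℝ :=
  (1/2 : ℝ) ^ k * (1 - Real.cos (k * (2 * π / L)))

lemma cos_one_iff {L : ℕ} (hL : 2 ≤ L) (k : ℕ) :
    Real.cos (k * (2 * π / L)) = 1 ↔ L ∣ k := by
  rw [Real.cos_eq_one_iff]
  constructor
  · rintro ⟨m, hm⟩
    have hL0 : (L : ℝ) ≠ 0 := by positivity
    have hπ : (2 * π) ≠ 0 := by positivity
    have hm2 : ((m : ℝ) * L) * (2 * π) = (k : ℝ) * (2 * π) := by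
      have := congrArg (fun x => x * (L : ℝ)) hm
      calc ((m : ℝ) * L) * (2 * π) = (m : ℝ) * (2 * π) * L := by ring
        _ = (k : ℝ) * (2 * π / L) * L := this
        _ = (k : ℝ) * (2 * π) := by field_simp
    have : (m : ℝ) * L = k := mul_right_cancel₀ hπ hm2
    have hmk : (m * L : ℤ) = (k : ℤ) := by exact_mod_cast this
    refine (Int.natCast_dvd_natCast.mp ?_)
    exact ⟨m, by rw [← hmk]; ring⟩
  · rintro ⟨m, rfl⟩
    refine ⟨m, ?_⟩
    have hL0 : (L : ℝ) ≠ 0 := by positivity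
    push_cast
    field_simp

lemma fseq_nonneg (L k : ℕ) : 0 ≤ fseq L k := by
  unfold fseq
  have := Real.cos_le_one ((k : ℝ) * (2 * π / L))
  have h2 : (0:ℝ) ≤ (1/2:ℝ)^k := by positivity
  nlinarith

lemma fseq_pos {L k : ℕ} (hL : 2 ≤ L) (h : ¬ L ∣ k) : 0 < fseq L k := by
  unfold fseq
  have h1 : Real.cos (k * (2 * π / L)) ≠ 1 := fun hc => h ((cos_one_iff hL k).mp hc)
  have h2 : Real.cos (k * (2 * π / L)) ≤ 1 := Real.cos_le_one _
  have h3 : Real.cos ((k : ℝ) * (2 * π / L)) < 1 := lt_of_le_of_ne h2 h1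
  have h4 : (0:ℝ) < (1/2:ℝ)^k := by positivity
  nlinarith

lemma fseq_zero {L k : ℕ} (hL : 2 ≤ L) (h : L ∣ k) : fseq L k = 0 := by
  unfold fseq
  rw [(cos_one_iff hL k).mpr h]
  ring

lemma fseq_summable (L : ℕ) : Summable (fseq L) := by
  refine Summable.of_nonneg_of_le (fseq_nonneg L) (fun k => ?_)
    (((summable_geometric_of_lt_one (by norm_num) (by norm_num : (1/2:ℝ) < 1))).mul_left 2)
  unfold fseq
  have h1 : (1 : ℝ) - Real.cos (k * (2 * π / L)) ≤ 2 := by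
    have := Real.neg_one_le_cos ((k : ℝ) * (2 * π / L))
    linarith
  have h2 : (0:ℝ) ≤ (1/2:ℝ)^k := by positivity
  calc (1/2:ℝ)^k * (1 - Real.cos (k * (2*π/L))) ≤ (1/2:ℝ)^k * 2 := by
        exact mul_le_mul_of_nonneg_left h1 h2
    _ = 2 * (1/2:ℝ)^k := by ring

lemma fseq_tsum_pos {L : ℕ} (hL : 2 ≤ L) : 0 < ∑' k, fseq L k := by
  have h1 : ¬ L ∣ 1 := fun h => by
    have := Nat.le_of_dvd one_pos h; omega
  calc (0:ℝ) < fseq L 1 := fseq_pos hL h1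
    _ ≤ ∑' k, fseq L k := Summable.le_tsum (fseq_summable L) 1 (fun j _ => fseq_nonneg L j)

/-- the equiv between unary words and naturals -/
def lue : List Unit ≃ ℕ where
  toFun := List.length
  invFun := fun n => List.replicate n ()
  left_inv := fun w => (List.eq_replicate_length.mpr (fun b _ => rfl)).symm
  right_inv := fun n => List.length_replicate

end Stmt12Aux

namespace Stmt12Aux

noncomputable def T3 (φ : ℝ) : Matrix (Fin 3) (Fin 3) ℝ :=
  (1/2 : ℝ) • !![1, 0, 0; 0, Real.cos φ, -Real.sin φ; 0, Real.sin φ, Real.cos φ]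

lemma T3_pow_mulVec (φ : ℝ) (k : ℕ) :
    ((T3 φ) ^ k).mulVec ![1, 1, 0] =
      ![(1/2:ℝ)^k, (1/2:ℝ)^k * Real.cos (k * φ), (1/2:ℝ)^k * Real.sin (k * φ)] := by
  induction k with
  | zero =>
      funext i
      fin_cases i <;> simp [Matrix.one_mulVec]
  | succ k ih =>
      rw [pow_succ', ← Matrix.mulVec_mulVec, ih]
      funext i
      have hc : ((k:ℝ) + 1) * φ = k * φ + φ := by ring
      fin_cases i <;>
        simp [T3, Matrix.mulVec, dotProduct, Fin.sum_univ_three,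
          Nat.cast_succ, hc, Real.cos_add, Real.sin_add] <;> ring

lemma wordMat_unit (T : Unit → Matrix (Fin 3) (Fin 3) ℝ) (w : List Unit) :
    wordMat T w = (T ()) ^ w.length := by
  unfold wordMat
  have : T = Function.const Unit (T ()) := by funext u; cases u; rfl
  rw [this, List.map_const, List.prod_replicate]; rfl

lemma wordMat_unit' {n : ℕ} (T : Unit → Matrix (Fin n) (Fin n) ℝ) (w : List Unit) :
    wordMat T w = (T ()) ^ w.length := by
  unfold wordMat
  have : T = Function.const Unit (T ()) := by funext u; cases u; rfl
  rw [this, List.map_const, List.prod_replicate]; rfl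

end Stmt12Aux

theorem statement12 (N : ℕ) (hN : 1 ≤ N) :
    ∃ p : List Unit → ℝ, IsStochastic p ∧
      (∃ (ι τ : Fin 3 → ℝ) (T : Unit → Matrix (Fin 3) (Fin 3) ℝ),
        maSeries ι τ T = p) ∧
      ∀ (n : ℕ) (ι τ : Fin n → ℝ) (T : Unit → Matrix (Fin n) (Fin n) ℝ),
        IsPA ι τ T → maSeries ι τ T = p → N ≤ n := by
  classical
  obtain ⟨L, hNL, hLp⟩ := Nat.exists_infinite_primes N
  have hL2 : 2 ≤ L := hLp.two_le
  set c : ℝ := (∑' k, Stmt12Aux.fseq L k)⁻¹ with hcdef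
  have htsum : 0 < ∑' k, Stmt12Aux.fseq L k := Stmt12Aux.fseq_tsum_pos hL2
  have hcpos : 0 < c := inv_pos.mpr htsum
  refine ⟨fun w => c * Stmt12Aux.fseq L w.length, ⟨?_, ?_⟩, ?_, ?_⟩
  · intro w
    exact mul_nonneg hcpos.le (Stmt12Aux.fseq_nonneg L _)
  · -- HasSum
    have h1 : HasSum (fun k => c * Stmt12Aux.fseq L k) 1 := by
      have h2 := (Stmt12Aux.fseq_summable L).hasSum.mul_left c
      rwa [hcdef, inv_mul_cancel₀ htsum.ne'] at h2
    have h3 : ((fun w : List Unit => c * Stmt12Aux.fseq L w.length) ∘ Stmt12Aux.lue.symm)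
        = fun k => c * Stmt12Aux.fseq L k := by
      funext k
      simp [Stmt12Aux.lue]
    exact (Stmt12Aux.lue.symm.hasSum_iff).mp (h3 ▸ h1)
  · -- 3-state MA
    refine ⟨![c, -c, 0], ![1, 1, 0], fun _ => Stmt12Aux.T3 (2 * Real.pi / L), ?_⟩
    funext w
    rw [maSeries, Stmt12Aux.wordMat_unit', Stmt12Aux.T3_pow_mulVec]
    simp [dotProduct, Fin.sum_univ_three, Stmt12Aux.fseq]
    ring
  · -- lower bound for PAs
    intro n ι τ T hPA hEq
    by_contra hlt
    push_neg at hlt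
    obtain ⟨hι, hτ, hT, hιsum, _⟩ := hPA
    set M : Matrix (Fin n) (Fin n) ℝ := T () with hMdef
    have hM : ∀ q q', 0 ≤ M q q' := hT ()
    have hval : ∀ k : ℕ, ι ⬝ᵥ (M ^ k).mulVec τ = c * Stmt12Aux.fseq L k := by
      intro k
      have h := congrFun hEq (List.replicate k ())
      rwa [maSeries, Stmt12Aux.wordMat_unit', List.length_replicate] at h
    set k : ℕ := n * L + 1 with hkdef
    have hk1 : ¬ L ∣ k := by
      intro h
      rw [hkdef] at h
      have h2 : L ∣ 1 := (Nat.dvd_add_right (dvd_mul_left L n)).mp h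
      have := Nat.le_of_dvd one_pos h2
      omega
    have hppos : 0 < ι ⬝ᵥ (M ^ k).mulVec τ := by
      rw [hval]
      exact mul_pos hcpos (Stmt12Aux.fseq_pos hL2 hk1)
    have hex : ∃ q, 0 < ι q * (M ^ k).mulVec τ q := by
      by_contra hcon
      push_neg at hcon
      have h2 : ι ⬝ᵥ (M ^ k).mulVec τ ≤ 0 := Finset.sum_nonpos fun q _ => hcon q
      exact absurd hppos (not_lt.mpr h2)
    obtain ⟨q, hq⟩ := hex
    have hιq : 0 < ι q := by
      rcases mul_pos_iff.mp hq with ⟨h1, _⟩ | ⟨h1, _⟩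
      · exact h1
      · exact absurd (hι q) (not_le.mpr h1)
    have hgq : 0 < (M ^ k).mulVec τ q := by
      rcases mul_pos_iff.mp hq with ⟨_, h2⟩ | ⟨_, h2⟩
      · exact h2
      · exact absurd (Stmt12Aux.g_nonneg hM hτ k q) (not_le.mpr h2)
    have hkn : Fintype.card (Fin n) ≤ k := by
      have : n ≤ n * L := Nat.le_mul_of_pos_right n (by omega)
      simp only [Fintype.card_fin]
      omega
    obtain ⟨cc, hcc0, hccn, hpump⟩ := Stmt12Aux.pa_pump hM hτ hkn hgq
    have hccn' : cc < L := by
      simp only [Fintype.card_fin] at hccn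
      omega
    haveI : NeZero L := ⟨by omega⟩
    haveI := Fact.mk hLp
    have hcz : ((cc : ZMod L)) ≠ 0 := by
      intro h
      have := (ZMod.natCast_eq_zero_iff cc L).mp h
      have := Nat.le_of_dvd hcc0 this
      omega
    set j : ℕ := ((-(k : ZMod L)) * (cc : ZMod L)⁻¹).val with hjdef
    have hdvd : L ∣ (k + j * cc) := by
      rw [← ZMod.natCast_eq_zero_iff]
      push_cast
      rw [hjdef, ZMod.natCast_val, ZMod.cast_id]
      rw [mul_assoc, inv_mul_cancel₀ hcz, mul_one]
      push_cast
      ring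
    have hzero : ι ⬝ᵥ (M ^ (k + j * cc)).mulVec τ = 0 := by
      rw [hval, Stmt12Aux.fseq_zero hL2 hdvd, mul_zero]
    have hpos2 : 0 < ι ⬝ᵥ (M ^ (k + j * cc)).mulVec τ := by
      have hterm : 0 < ι q * (M ^ (k + j * cc)).mulVec τ q := mul_pos hιq (hpump j)
      calc (0:ℝ) < ι q * (M ^ (k + j * cc)).mulVec τ q := hterm
        _ ≤ ∑ q', ι q' * (M ^ (k + j * cc)).mulVec τ q' :=
            Finset.single_le_sum
              (fun q' _ => mul_nonneg (hι q') (Stmt12Aux.g_nonneg hM hτ _ q'))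
              (Finset.mem_univ q)
        _ = ι ⬝ᵥ (M ^ (k + j * cc)).mulVec τ := rfl
    linarith
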